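/- Let a, b, d, β, γ, θ₀ > 0, α₁ ∈ (0,1), define â* = 4bd²β²(1−α₁)² / (α₁⁴γ² + 4dβ²α₁γ(1−α₁)(α₁ − (1−α₁)θ₀)), and suppose θ₀ < α₁/(1−α₁) and â* < a < bd(1−α₁)/(α₁γ(α₁ − (1−α₁)θ₀)). Then the quadratic a·d·β·(1−α₁)·A² − a·α₁²·γ·A + β·((1−α₁)·(b·d + a·α₁·γ·θ₀) − a·α₁²·γ) = 0 has exactly two real roots A₁ = (aα₁²γ − √Δ)/(2aβd(1−α₁)) and A₂ = (aα₁²γ + √Δ)/(2aβd(1−α₁)), where Δ = a·(aα₁⁴γ² − 4dβ²((1−α₁)²(bd + aα₁γθ₀) − aα₁²γ(1−α₁))), and they satisfy 0 < A₁ < A₂. -/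

import Mathlib

/-- Case (4) of the Existence of Equilibria theorem: for
`â* < a < bd(1-α₁)/(α₁γ(α₁-(1-α₁)θ₀))` and `θ₀ < α₁/(1-α₁)` the equilibrium
quadratic has exactly two real roots `0 < A₁ < A₂`. -/
theorem stmt_13 (a b d β γ θ₀ α₁ : ℝ) (ha : 0 < a) (hb : 0 < b) (hd : 0 < d)
    (hβ : 0 < β) (hγ : 0 < γ) (hθ₀ : 0 < θ₀) (hα₁ : α₁ ∈ Set.Ioo (0:ℝ) 1)
    (hθ₀lt : θ₀ < α₁ / (1 - α₁))
    (halow : 4 * b * d ^ 2 * β ^ 2 * (1 - α₁) ^ 2 /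
      (α₁ ^ 4 * γ ^ 2 +
        4 * d * β ^ 2 * α₁ * γ * (1 - α₁) * (α₁ - (1 - α₁) * θ₀)) < a)
    (hahigh : a < b * d * (1 - α₁) / (α₁ * γ * (α₁ - (1 - α₁) * θ₀))) :
    let Δ := a * (a * α₁ ^ 4 * γ ^ 2 -
      4 * d * β ^ 2 * ((1 - α₁) ^ 2 * (b * d + a * α₁ * γ * θ₀) -
        a * α₁ ^ 2 * γ * (1 - α₁)))
    let A₁ := (a * α₁ ^ 2 * γ - Real.sqrt Δ) / (2 * a * β * d * (1 - α₁))
    let A₂ := (a * α₁ ^ 2 * γ + Real.sqrt Δ) / (2 * a * β * d * (1 - α₁))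
    0 < A₁ ∧ A₁ < A₂ ∧
    (a * d * β * (1 - α₁) * A₁ ^ 2 - a * α₁ ^ 2 * γ * A₁ +
      β * ((1 - α₁) * (b * d + a * α₁ * γ * θ₀) - a * α₁ ^ 2 * γ) = 0) ∧
    (a * d * β * (1 - α₁) * A₂ ^ 2 - a * α₁ ^ 2 * γ * A₂ +
      β * ((1 - α₁) * (b * d + a * α₁ * γ * θ₀) - a * α₁ ^ 2 * γ) = 0) ∧
    ∀ A : ℝ,
      a * d * β * (1 - α₁) * A ^ 2 - a * α₁ ^ 2 * γ * A +
        β * ((1 - α₁) * (b * d + a * α₁ * γ * θ₀) - a * α₁ ^ 2 * γ) = 0 →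
      A = A₁ ∨ A = A₂ := by
  obtain ⟨hα0, hα1⟩ := hα₁
  have h1α : 0 < 1 - α₁ := by linarith
  -- positivity of α₁ - (1-α₁)θ₀
  have hαθ : 0 < α₁ - (1 - α₁) * θ₀ := by
    have := (lt_div_iff₀ h1α).mp hθ₀lt
    nlinarith
  -- c0 > 0
  have hc0 : 0 < β * ((1 - α₁) * (b * d + a * α₁ * γ * θ₀) - a * α₁ ^ 2 * γ) := by
    have hden : 0 < α₁ * γ * (α₁ - (1 - α₁) * θ₀) := by positivity
    have := (lt_div_iff₀ hden).mp hahigh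
    have h2 : a * (α₁ * γ * (α₁ - (1 - α₁) * θ₀)) < b * d * (1 - α₁) := this
    have h3 : (1 - α₁) * (b * d + a * α₁ * γ * θ₀) - a * α₁ ^ 2 * γ > 0 := by nlinarith
    positivity
  intro Δ A₁ A₂
  -- Δ > 0
  have hD0 : 0 < α₁ ^ 4 * γ ^ 2 + 4 * d * β ^ 2 * α₁ * γ * (1 - α₁) * (α₁ - (1 - α₁) * θ₀) := by
    positivity
  have hΔpos : 0 < Δ := by
    have := (div_lt_iff₀ hD0).mp halow
    show 0 < a * (a * α₁ ^ 4 * γ ^ 2 -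
      4 * d * β ^ 2 * ((1 - α₁) ^ 2 * (b * d + a * α₁ * γ * θ₀) -
        a * α₁ ^ 2 * γ * (1 - α₁)))
    nlinarith
  have hΔnn : 0 ≤ Δ := le_of_lt hΔpos
  set s := Real.sqrt Δ with hs
  have hs0 : 0 < s := Real.sqrt_pos.mpr hΔpos
  have hs2 : s ^ 2 = Δ := Real.sq_sqrt hΔnn
  have hc2 : 0 < 2 * a * β * d * (1 - α₁) := by positivity
  have hc2' : (2 * a * β * d * (1 - α₁)) ≠ 0 := ne_of_gt hc2
  -- s < aα₁²γ
  have hsml : s < a * α₁ ^ 2 * γ := by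
    have hpos : 0 < a * α₁ ^ 2 * γ := by positivity
    rw [hs, show a * α₁ ^ 2 * γ = Real.sqrt ((a * α₁ ^ 2 * γ)^2) from (Real.sqrt_sq hpos.le).symm]
    apply Real.sqrt_lt_sqrt hΔnn
    show Δ < (a * α₁ ^ 2 * γ)^2
    have : Δ = (a * α₁ ^ 2 * γ)^2 - 2 * (2 * a * β * d * (1 - α₁)) *
        (β * ((1 - α₁) * (b * d + a * α₁ * γ * θ₀) - a * α₁ ^ 2 * γ)) := by
      show a * _ = _
      ring
    nlinarith
  have hA1pos : 0 < A₁ := by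
    show 0 < (a * α₁ ^ 2 * γ - s) / (2 * a * β * d * (1 - α₁))
    exact div_pos (by linarith) hc2
  have hA12 : A₁ < A₂ := by
    show (a * α₁ ^ 2 * γ - s) / (2 * a * β * d * (1 - α₁)) <
      (a * α₁ ^ 2 * γ + s) / (2 * a * β * d * (1 - α₁))
    exact (div_lt_div_iff_of_pos_right hc2).mpr (by linarith)
  -- factorization
  have hfact : ∀ A : ℝ, a * d * β * (1 - α₁) * A ^ 2 - a * α₁ ^ 2 * γ * A +
      β * ((1 - α₁) * (b * d + a * α₁ * γ * θ₀) - a * α₁ ^ 2 * γ) =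
      a * d * β * (1 - α₁) * ((A - A₁) * (A - A₂)) := by
    intro A
    show _ = a * d * β * (1 - α₁) * ((A - (a * α₁ ^ 2 * γ - s) / (2 * a * β * d * (1 - α₁))) *
      (A - (a * α₁ ^ 2 * γ + s) / (2 * a * β * d * (1 - α₁))))
    field_simp
    linear_combination hs2
  have hcne : a * d * β * (1 - α₁) ≠ 0 := by positivity
  refine ⟨hA1pos, hA12, ?_, ?_, ?_⟩
  · rw [hfact A₁]; simp
  · rw [hfact A₂]; simp
  · intro A hA
    rw [hfact A] at hA
    rcases mul_eq_zero.mp hA with h | h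
    · exact absurd h hcne
    · rcases mul_eq_zero.mp h with h | h
      · left; linarith [sub_eq_zero.mp h]
      · right; linarith [sub_eq_zero.mp h]
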